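/- Let T be a tree with at least two vertices and let r be its radius. Then c_r(T) = 1; that is, a single cop, suitably placed, can capture a robber on T within r time-steps. -/

import Mathlib

open SimpleGraph

/-- `c'` is a one-step move of the `k` cops from configuration `c` in `G`:
each cop stays put or moves to an adjacent vertex. -/
def OneStepMove {V : Type*} (G : SimpleGraph V) {k : ℕ} (c c' : Fin k → V) : Prop :=
  ∀ i, c' i = c i ∨ G.Adj (c i) (c' i)

/-- The capture predicate `Cap G T s c r`: from cop configuration `c`, with the robber at `r`,
the cops can capture the robber within `s` time-steps, ending in a configuration in `T`. -/
def Cap {V : Type*} (G : SimpleGraph V) {k : ℕ} (T : Set (Fin k → V)) :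
    ℕ → (Fin k → V) → V → Prop
  | 0, _, _ => False
  | s + 1, c, r => ∃ c', OneStepMove G c c' ∧
      (((∃ i, c' i = r) ∧ c' ∈ T) ∨
        ∀ r', (r' = r ∨ G.Adj r r') →
          (((∃ i, c' i = r') ∧ c' ∈ T) ∨ Cap G T s c' r'))

/-- `k` cops can win a single play on `G` within `t` time-steps. -/
def TimedWin {V : Type*} (G : SimpleGraph V) (k t : ℕ) : Prop :=
  ∃ c : Fin k → V, ∀ r : V,
    (∃ i, c i = r) ∨ Cap G (Set.univ : Set (Fin k → V)) t c r

/-- The `t`-capture cop number `c_t(G)`. -/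
noncomputable def captureCopNumber {V : Type*} (G : SimpleGraph V) (t : ℕ) : ℕ :=
  sInf {k | 1 ≤ k ∧ TimedWin G k t}

/-- `k` cops can win the eternal game on `G`, capturing each robber within `t` time-steps. -/
def EternalWin {V : Type*} (G : SimpleGraph V) (k t : ℕ) : Prop :=
  ∃ T : Set (Fin k → V), T.Nonempty ∧
    ∀ c ∈ T, ∀ r : V, (∃ i, c i = r) ∨ Cap G T t c r

/-- The eternal cop number `c_t^∞(G)`. -/
noncomputable def eternalCopNumber {V : Type*} (G : SimpleGraph V) (t : ℕ) : ℕ :=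
  sInf {k | 1 ≤ k ∧ EternalWin G k t}

/-- The cop number `c(G)`. -/
noncomputable def copNumber {V : Type*} (G : SimpleGraph V) : ℕ :=
  sInf {k | ∃ t, 1 ≤ t ∧ captureCopNumber G t ≤ k}

/-- `ℓ_i = ⌈(1 - 2^{-i}) t - 1/2⌉`. -/
def ell (t i : ℕ) : ℕ :=
  (⌈((1 : ℚ) - 2 ^ (-(i : ℤ))) * (t : ℚ) - 1 / 2⌉).toNat

/-- The subgraph of `G` induced by `W` is a retract of `G`. -/
def IsRetract {V : Type*} (G : SimpleGraph V) (W : Set V) : Prop :=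
  ∃ f : V → V, (∀ v, f v ∈ W) ∧ (∀ w ∈ W, f w = w) ∧
    ∀ u v, G.Adj u v → f u = f v ∨ G.Adj (f u) (f v)

/-- The radius of a graph. -/
noncomputable def graphRadius {V : Type*} (G : SimpleGraph V) : ℕ :=
  sInf {r | ∃ v, ∀ u, G.dist v u ≤ r}


namespace TreeCopAux

variable {V : Type*} {G : SimpleGraph V}

/-- There is a walk from `n` to `u` avoiding the edge `s(v,n)`. -/
def Branch (G : SimpleGraph V) (v n u : V) : Prop :=
  ∃ p : G.Walk n u, s(v, n) ∉ p.edges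

lemma not_branch_self (hT : G.IsTree) {v n : V} (h : G.Adj v n) : ¬ Branch G v n v := by
  rintro ⟨p, hp⟩
  have hb := (isAcyclic_iff_forall_adj_isBridge.mp hT.IsAcyclic) h
  rw [isBridge_iff] at hb
  exact hb (reachable_delete_edges_iff_exists_walk.mpr
    ⟨p.reverse, by simpa [SimpleGraph.Walk.edges_reverse, List.mem_reverse] using hp⟩)

lemma branch_ne (hT : G.IsTree) {v n r : V} (h : G.Adj v n) (hbr : Branch G v n r) :
    r ≠ v := fun he => not_branch_self hT h (he ▸ hbr)

lemma branch_step (hT : G.IsTree) {v n r r' : V} (hadj : G.Adj v n)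
    (hbr : Branch G v n r) (hrn : r ≠ n) (h : r' = r ∨ G.Adj r r') :
    Branch G v n r' := by
  rcases h with rfl | h
  · exact hbr
  · have hrv : r ≠ v := branch_ne hT hadj hbr
    obtain ⟨p, hp⟩ := hbr
    refine ⟨p.concat h, ?_⟩
    rw [SimpleGraph.Walk.edges_concat]
    simp only [List.concat_eq_append, List.mem_append, List.mem_singleton]
    rintro (hm | hm)
    · exact hp hm
    · rw [Sym2.eq_iff] at hm
      rcases hm with ⟨h1, h2⟩ | ⟨h1, h2⟩ <;> simp_all

lemma exists_branch [DecidableEq V] (hconn : G.Connected) {v r : V} (hne : v ≠ r) :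
    ∃ n, G.Adj v n ∧ Branch G v n r := by
  obtain ⟨p, hp⟩ := (hconn v r).exists_walk_length_eq_dist
  cases p with
  | nil => exact (hne rfl).elim
  | @cons _ n _ h q =>
    refine ⟨n, h, q, fun he => ?_⟩
    have hv : v ∈ q.support := q.fst_mem_support_of_mem_edges he
    have h1 := SimpleGraph.dist_le (q.dropUntil v hv)
    have h2 := q.length_dropUntil_le hv
    simp only [SimpleGraph.Walk.length_cons] at hp
    omega

lemma dist_branch [DecidableEq V] (hT : G.IsTree) {v n u : V} (hadj : G.Adj v n)
    (hu : Branch G v n u) : G.dist v u = G.dist n u + 1 := by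
  have hconn := hT.isConnected
  have hle : G.dist v u ≤ G.dist n u + 1 := by
    obtain ⟨q, hq⟩ := (hconn n u).exists_walk_length_eq_dist
    have := SimpleGraph.dist_le (SimpleGraph.Walk.cons hadj q)
    simp only [SimpleGraph.Walk.length_cons] at this
    omega
  obtain ⟨p, hp⟩ := (hconn v u).exists_walk_length_eq_dist
  have he : s(v, n) ∈ p.edges := by
    by_contra he
    obtain ⟨w, hw⟩ := hu
    refine not_branch_self hT hadj ⟨w.append p.reverse, ?_⟩
    rw [SimpleGraph.Walk.edges_append]
    simp only [List.mem_append, SimpleGraph.Walk.edges_reverse, List.mem_reverse]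
    rintro (hm | hm)
    · exact hw hm
    · exact he hm
  have hn : n ∈ p.support := p.snd_mem_support_of_mem_edges he
  have hs := congrArg SimpleGraph.Walk.length (p.take_spec hn)
  rw [SimpleGraph.Walk.length_append] at hs
  have hpos : 0 < (p.takeUntil n hn).length := by
    rcases Nat.eq_zero_or_pos (p.takeUntil n hn).length with h0 | h0
    · exact absurd (SimpleGraph.Walk.eq_of_length_eq_zero h0) hadj.ne
    · exact h0
  have hd := SimpleGraph.dist_le (p.dropUntil n hn)
  omega

lemma branch_mono [DecidableEq V] (hT : G.IsTree) {v n n' r' : V} (hvn : G.Adj v n)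
    (hnn' : G.Adj n n') (h1 : Branch G v n r') (h2 : Branch G n n' r') :
    ∀ u, Branch G n n' u → Branch G v n u := by
  have hvn' : v ≠ n := hvn.ne
  have hnn'ne : n ≠ n' := hnn'.ne
  have hn'v : n' ≠ v := by
    rintro rfl
    obtain ⟨p1, hp1⟩ := h1
    obtain ⟨p2, hp2⟩ := h2
    refine not_branch_self hT hvn ⟨p1.append p2.reverse, ?_⟩
    rw [SimpleGraph.Walk.edges_append]
    simp only [List.mem_append, SimpleGraph.Walk.edges_reverse, List.mem_reverse]
    rintro (hm | hm)
    · exact hp1 hm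
    · exact hp2 (by rwa [Sym2.eq_swap] at hm)
  rintro u ⟨w, hw⟩
  have hvsup : v ∉ w.support := by
    intro hv
    refine not_branch_self hT hnn' ⟨(w.takeUntil v hv).concat hvn, ?_⟩
    rw [SimpleGraph.Walk.edges_concat]
    simp only [List.concat_eq_append, List.mem_append, List.mem_singleton]
    rintro (hm | hm)
    · exact hw (w.edges_takeUntil_subset hv hm)
    · rw [Sym2.eq_iff] at hm
      rcases hm with ⟨hx, hy⟩ | ⟨hx, hy⟩ <;> simp_all
  refine ⟨SimpleGraph.Walk.cons hnn' w, ?_⟩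
  simp only [SimpleGraph.Walk.edges_cons, List.mem_cons]
  rintro (hm | hm)
  · rw [Sym2.eq_iff] at hm
    rcases hm with ⟨hx, hy⟩ | ⟨hx, hy⟩ <;> simp_all
  · exact hvsup (w.fst_mem_support_of_mem_edges hm)

lemma cap_lemma [DecidableEq V] (hT : G.IsTree) :
    ∀ (s : ℕ) (v n r : V), G.Adj v n → Branch G v n r →
    (∀ u, Branch G v n u → G.dist v u ≤ s) →
    Cap G (Set.univ : Set (Fin 1 → V)) s (fun _ => v) r := by
  intro s
  induction s with
  | zero =>
    intro v n r hadj hbr hb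
    have hrv : r ≠ v := branch_ne hT hadj hbr
    have hpos := hT.isConnected.pos_dist_of_ne (Ne.symm hrv)
    have := hb r hbr
    simp only [Cap]
    omega
  | succ s ih =>
    intro v n r hadj hbr hb
    refine ⟨fun _ => n, fun _ => Or.inr hadj, ?_⟩
    by_cases hnr : n = r
    · exact Or.inl ⟨⟨0, hnr⟩, Set.mem_univ _⟩
    · refine Or.inr fun r' hr' => ?_
      have hbr' : Branch G v n r' :=
        branch_step hT hadj hbr (fun he => hnr he.symm) hr'
      by_cases hnr' : n = r'
      · exact Or.inl ⟨⟨0, hnr'⟩, Set.mem_univ _⟩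
      · obtain ⟨n', hadj', hbr''⟩ := exists_branch hT.isConnected hnr'
        refine Or.inr (ih n n' r' hadj' hbr'' fun u hu => ?_)
        have h1 := branch_mono hT hadj hadj' hbr' hbr'' u hu
        have h2 := dist_branch hT hadj h1
        have h3 := hb u h1
        omega

end TreeCopAux

/-- for a tree `T` with at least two vertices and radius `r`, `c_r(T) = 1`. -/
theorem captureCopNumber_tree_radius {V : Type*} [Fintype V] (G : SimpleGraph V)
    (hT : G.IsTree) (h2 : 2 ≤ Fintype.card V) :
    captureCopNumber G (graphRadius G) = 1 := by
  classical
  have hconn := hT.isConnected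
  have hne : Nonempty V := Fintype.card_pos_iff.mp (by omega)
  obtain ⟨v0⟩ := hne
  have hS : (Fintype.card V) ∈ {r | ∃ v, ∀ u, G.dist v u ≤ r} := by
    refine ⟨v0, fun u => ?_⟩
    obtain ⟨p⟩ := hconn v0 u
    have h1 := SimpleGraph.dist_le p.bypass
    have h2 := p.bypass_isPath.length_lt
    omega
  have hmem : graphRadius G ∈ {r | ∃ v, ∀ u, G.dist v u ≤ r} :=
    Nat.sInf_mem ⟨_, hS⟩
  obtain ⟨v, hv⟩ := hmem
  have hwin : TimedWin G 1 (graphRadius G) := by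
    refine ⟨fun _ => v, fun r => ?_⟩
    by_cases h : v = r
    · exact Or.inl ⟨0, h⟩
    · obtain ⟨n, hadj, hbr⟩ := TreeCopAux.exists_branch hconn h
      exact Or.inr (TreeCopAux.cap_lemma hT (graphRadius G) v n r hadj hbr
        fun u _ => hv u)
  have hmem1 : 1 ∈ {k | 1 ≤ k ∧ TimedWin G k (graphRadius G)} := ⟨le_refl 1, hwin⟩
  exact le_antisymm (Nat.sInf_le hmem1) (Nat.sInf_mem ⟨1, hmem1⟩).1
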